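/- Let K be a valued field of characteristic 0 with valuation ring O_K. Define O' := {x ∈ K : ∃ m ∈ ℕ, m ≥ 1, |m·x| ≤ 1}. Then O' is a valuation ring of K (a subring such that for every x ∈ K^×, x ∈ O' or x^{-1} ∈ O'), it contains both O_K and the image of ℚ in K, and it is the smallest subring of K with these two properties. -/

import Mathlib

variable {K : Type*} [Field K] [CharZero K]
  {Γ₀ : Type*} [LinearOrderedCommGroupWithZero Γ₀]

/-- The equicharacteristic-zero coarsening ring
`O' = {x ∈ K : ∃ m ≥ 1, |m·x| ≤ 1}`. -/
def Oeqc (v : Valuation K Γ₀) : Set K :=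
  {x : K | ∃ m : ℕ, m ≠ 0 ∧ v ((m : K) * x) ≤ 1}

lemma Oeqc_nat_le_one (v : Valuation K Γ₀) (n : ℕ) : v (n : K) ≤ 1 := by
  induction n with
  | zero => simp
  | succ n ih =>
    push_cast
    exact le_trans (v.map_add _ _) (max_le ih (le_of_eq v.map_one))

lemma Oeqc_int_le_one (v : Valuation K Γ₀) (n : ℤ) : v (n : K) ≤ 1 := by
  induction n using Int.rec with
  | ofNat n => simpa using Oeqc_nat_le_one v n
  | negSucc n =>
    rw [Int.cast_negSucc, v.map_neg]
    exact_mod_cast Oeqc_nat_le_one v (n + 1)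

/-- For a valued field `K` of characteristic zero, `O' = {x : ∃ m ≥ 1, |m·x| ≤ 1}`
is a valuation ring of `K` (a subring with `x ∈ O'` or `x⁻¹ ∈ O'` for all `x ≠ 0`),
it contains the valuation ring `O_K` and the image of `ℚ`, and it is the smallest
subring of `K` with these two properties. -/
theorem Oeqc_is_smallest_eqc_valuation_ring (v : Valuation K Γ₀) :
    ((1 : K) ∈ Oeqc v ∧ (∀ x ∈ Oeqc v, ∀ y ∈ Oeqc v, x + y ∈ Oeqc v) ∧
      (∀ x ∈ Oeqc v, ∀ y ∈ Oeqc v, x * y ∈ Oeqc v) ∧ (∀ x ∈ Oeqc v, -x ∈ Oeqc v)) ∧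
    (∀ x : K, x ≠ 0 → x ∈ Oeqc v ∨ x⁻¹ ∈ Oeqc v) ∧
    (∀ x : K, v x ≤ 1 → x ∈ Oeqc v) ∧
    (∀ q : ℚ, (q : K) ∈ Oeqc v) ∧
    (∀ S : Subring K, (∀ x : K, v x ≤ 1 → x ∈ S) → (∀ q : ℚ, (q : K) ∈ S) →
      Oeqc v ⊆ ↑S) := by
  refine ⟨⟨⟨1, one_ne_zero, by simp⟩, ?_, ?_, ?_⟩, ?_, ?_, ?_, ?_⟩
  · rintro x ⟨m, hm, hx⟩ y ⟨n, hn, hy⟩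
    refine ⟨m * n, mul_ne_zero hm hn, ?_⟩
    push_cast
    have : (m : K) * n * (x + y) = (n : K) * ((m : K) * x) + (m : K) * ((n : K) * y) := by
      ring
    rw [this]
    refine le_trans (v.map_add _ _) (max_le ?_ ?_)
    · rw [v.map_mul]
      exact mul_le_one' (Oeqc_nat_le_one v n) hx
    · rw [v.map_mul]
      exact mul_le_one' (Oeqc_nat_le_one v m) hy
  · rintro x ⟨m, hm, hx⟩ y ⟨n, hn, hy⟩
    refine ⟨m * n, mul_ne_zero hm hn, ?_⟩
    push_cast
    have : (m : K) * n * (x * y) = ((m : K) * x) * ((n : K) * y) := by ring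
    rw [this, v.map_mul]
    exact mul_le_one' hx hy
  · rintro x ⟨m, hm, hx⟩
    exact ⟨m, hm, by rwa [mul_neg, v.map_neg]⟩
  · intro x hx
    rcases le_or_gt (v x) 1 with h | h
    · exact Or.inl ⟨1, one_ne_zero, by simpa using h⟩
    · refine Or.inr ⟨1, one_ne_zero, ?_⟩
      simp only [Nat.cast_one, one_mul]
      rw [v.map_inv]
      exact inv_le_one_of_one_le₀ (le_of_lt h)
  · intro x hx
    exact ⟨1, one_ne_zero, by simpa using hx⟩
  · intro q
    refine ⟨q.den, q.den_nz, ?_⟩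
    have : (q.den : K) * (q : K) = (q.num : K) := by
      rw [mul_comm]
      exact_mod_cast Rat.mul_den_eq_num q
    rw [this]
    exact Oeqc_int_le_one v q.num
  · rintro S hO hQ x ⟨m, hm, hx⟩
    have h1 : (m : K) * x ∈ S := hO _ hx
    have h2 : ((1 / (m : ℚ) : ℚ) : K) ∈ S := hQ _
    have : x = ((1 / (m : ℚ) : ℚ) : K) * ((m : K) * x) := by
      have hm' : (m : K) ≠ 0 := Nat.cast_ne_zero.mpr hm
      push_cast
      field_simp
    rw [this]
    exact S.mul_mem h2 h1
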